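/- Assume the comparison cpX is symmetric, that j is an isomorphism, and that cpX is cancellable in its second argument: for all morphisms u, v : W ⟶ FX, cpX ∘ (id_{F̄X} ⊗ u) = cpX ∘ (id_{F̄X} ⊗ v) implies u = v. Then cpX is also cancellable in its first argument: for all morphisms u, v : W ⟶ F̄X, cpX ∘ (u ⊗ id_{FX}) = cpX ∘ (v ⊗ id_{FX}) implies u = v. (In the symmetric case the two mono requirements for a comparison relation reduce to a single one.) -/

import Mathlib

open CategoryTheory MonoidalCategory

universe u v

/-- The twist map `τ : (X̄ ⊗ Y)‾ ≅ Ȳ ⊗ X` in an involutive symmetric monoidal category. -/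
noncomputable def twist {C : Type u} [Category.{v} C] [MonoidalCategory C]
    [SymmetricCategory C] (B : C ⥤ C) (ι : 𝟭 C ≅ B ⋙ B)
    (ξ : ∀ X Y : C, B.obj X ⊗ B.obj Y ≅ B.obj (X ⊗ Y)) (X Y : C) :
    B.obj (B.obj X ⊗ Y) ≅ B.obj Y ⊗ X :=
  (ξ (B.obj X) Y).symm ≪≫ tensorIso (ι.app X).symm (Iso.refl (B.obj Y)) ≪≫ β_ X (B.obj Y)

/-- For a symmetric comparison relation, cancellability in the second argument implies
cancellability in the first argument. -/
theorem symmetric_comparison_mono {C : Type u} [Category.{v} C] [MonoidalCategory C]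
    [SymmetricCategory C] (B : C ⥤ C)
    (ι : 𝟭 C ≅ B ⋙ B) (hι : ∀ X : C, B.map (ι.hom.app X) = ι.hom.app (B.obj X))
    (ζ : 𝟙_ C ≅ B.obj (𝟙_ C))
    (ξ : ∀ X Y : C, B.obj X ⊗ B.obj Y ≅ B.obj (X ⊗ Y))
    (hξ : ∀ {X X' Y Y' : C} (f : X ⟶ X') (g : Y ⟶ Y'),
      (B.map f ⊗ₘ B.map g) ≫ (ξ X' Y').hom = (ξ X Y).hom ≫ B.map (f ⊗ₘ g))
    (Ω FX : C) (j : B.obj Ω ⟶ Ω) [IsIso j]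
    (cpX : B.obj FX ⊗ FX ⟶ Ω)
    -- cpX is symmetric
    (hsymX : (twist B ι ξ FX FX).hom ≫ cpX = B.map cpX ≫ j)
    -- cpX is cancellable in its second argument
    (monoX2 : ∀ {W : C} (u v : W ⟶ FX),
      (𝟙 (B.obj FX) ⊗ₘ u) ≫ cpX = (𝟙 (B.obj FX) ⊗ₘ v) ≫ cpX → u = v) :
    -- then cpX is cancellable in its first argument
    ∀ {W : C} (u v : W ⟶ B.obj FX),
      (u ⊗ₘ 𝟙 FX) ≫ cpX = (v ⊗ₘ 𝟙 FX) ≫ cpX → u = v := by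
  intro W u v h
  -- rewrite B.map (w ⊗ 𝟙) ≫ twist in a normal form
  have key : ∀ w : W ⟶ B.obj FX,
      B.map (w ⊗ₘ 𝟙 FX) ≫ (twist B ι ξ FX FX).hom =
        (ξ W FX).inv ≫ (β_ (B.obj W) (B.obj FX)).hom ≫
          (𝟙 (B.obj FX) ⊗ₘ (B.map w ≫ ι.inv.app FX)) := by
    intro w
    have hmap : B.map (w ⊗ₘ 𝟙 FX) =
        (ξ W FX).inv ≫ (B.map w ⊗ₘ B.map (𝟙 FX)) ≫ (ξ (B.obj FX) FX).hom := by
      rw [hξ w (𝟙 FX), Iso.inv_hom_id_assoc]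
    rw [hmap, twist]
    simp only [Iso.trans_hom, Iso.symm_hom, tensorIso_hom, Iso.refl_hom,
      Category.assoc, Iso.hom_inv_id_assoc, B.map_id]
    rw [tensorHom_comp_tensorHom_assoc, Category.comp_id]
    congr 1
    have : (ι.app FX).inv = ι.inv.app FX := rfl
    rw [this]
    exact BraidedCategory.braiding_naturality _ (𝟙 (B.obj FX))
  -- apply B and j to the hypothesis, then use symmetry
  have h1 : B.map (u ⊗ₘ 𝟙 FX) ≫ (twist B ι ξ FX FX).hom ≫ cpX =
      B.map (v ⊗ₘ 𝟙 FX) ≫ (twist B ι ξ FX FX).hom ≫ cpX := by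
    rw [hsymX, ← Category.assoc, ← Category.assoc, ← B.map_comp, ← B.map_comp, h]
  rw [← Category.assoc, ← Category.assoc, key u, key v] at h1
  simp only [Category.assoc, Iso.cancel_iso_inv_left, Iso.cancel_iso_hom_left] at h1
  have h2 : B.map u ≫ ι.inv.app FX = B.map v ≫ ι.inv.app FX := monoX2 _ _ h1
  have h3 : B.map u = B.map v := by
    calc B.map u = (B.map u ≫ ι.inv.app FX) ≫ ι.hom.app FX := by simp
      _ = (B.map v ≫ ι.inv.app FX) ≫ ι.hom.app FX := by rw [h2]
      _ = B.map v := by simp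
  have hu := ι.hom.naturality u
  have hv := ι.hom.naturality v
  simp only [Functor.id_map, Functor.comp_map] at hu hv
  calc u = ι.hom.app W ≫ B.map (B.map u) ≫ ι.inv.app (B.obj FX) := by
        rw [← Category.assoc, ← hu]; simp
    _ = ι.hom.app W ≫ B.map (B.map v) ≫ ι.inv.app (B.obj FX) := by rw [h3]
    _ = v := by rw [← Category.assoc, ← hv]; simp
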